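/- Without a latency constraint, partial offloading is never optimal: with the notation of the context, the infimum, over all S₁ ∈ [0, S_app], t_UL > 0 with β_UL·S₁ ≤ t_UL·R_UL^max, and t_DL ≥ β_DL·S₁/R_DL^max, of the total energy e_UL(t_UL, β_UL·S₁) + ε₀·(S_app − S₁) + k_{rx,1}·t_DL + k_{rx,2}·β_DL·S₁ equals S_app·min(ε₀, δ), where δ := β_UL·ē_min + k_{rx,1}·β_DL/R_DL^max + k_{rx,2}·β_DL and ē_min := inf{ e_UL(1/r, 1) : 0 < r ≤ R_UL^max }. In particular the infimum equals the smaller of the value of processing all bits locally (ε₀·S_app) and the infimal value of offloading all bits (δ·S_app). -/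

import Mathlib

open Matrix
open scoped ComplexOrder

/-- Minimum uplink energy: infimum of `k₁ t + k₂ t · Re(Tr Q)` over positive semidefinite
transmit covariance matrices `Q` sustaining `s` bits in time `t` over channel `H` with
bandwidth `W`. -/
noncomputable def eUL {nF nMT : ℕ} (H : Matrix (Fin nF) (Fin nMT) ℂ)
    (W k1 k2 : ℝ) (t s : ℝ) : ℝ :=
  sInf { e : ℝ | ∃ Q : Matrix (Fin nMT) (Fin nMT) ℂ, Q.PosSemidef ∧
    s ≤ W * t * Real.logb 2 (((1 : Matrix (Fin nF) (Fin nF) ℂ) + H * Q * Hᴴ).det.re) ∧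
    e = k1 * t + k2 * t * (Matrix.trace Q).re }

lemma trace_re_nonneg {n : ℕ} (Q : Matrix (Fin n) (Fin n) ℂ) (hQ : Q.PosSemidef) :
    0 ≤ (Matrix.trace Q).re := by
  have h : ∀ i, 0 ≤ (Q i i).re := by
    intro i
    have := hQ.diag_nonneg (i := i)
    rw [Complex.le_def] at this
    simpa using this.1
  rw [Matrix.trace]
  simp only [Complex.re_sum]
  exact Finset.sum_nonneg fun i _ => h i

lemma eUL_nonneg {nF nMT : ℕ} (H : Matrix (Fin nF) (Fin nMT) ℂ)
    (W k1 k2 : ℝ) (hk1 : 0 ≤ k1) (hk2 : 0 ≤ k2) {t : ℝ} (ht : 0 ≤ t) (s : ℝ) :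
    0 ≤ eUL H W k1 k2 t s := by
  apply Real.sInf_nonneg
  rintro e ⟨Q, hQ, -, rfl⟩
  have := trace_re_nonneg Q hQ
  positivity

lemma eUL_zero_le {nF nMT : ℕ} (H : Matrix (Fin nF) (Fin nMT) ℂ)
    (W k1 k2 : ℝ) (hk1 : 0 ≤ k1) (hk2 : 0 ≤ k2) {t : ℝ} (ht : 0 ≤ t) :
    eUL H W k1 k2 t 0 ≤ k1 * t := by
  apply csInf_le
  · refine ⟨0, ?_⟩
    rintro e ⟨Q, hQ, -, rfl⟩
    have := trace_re_nonneg Q hQ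
    positivity
  · refine ⟨0, Matrix.PosSemidef.zero, ?_, by simp⟩
    simp

lemma eUL_smul {nF nMT : ℕ} (H : Matrix (Fin nF) (Fin nMT) ℂ)
    (W k1 k2 : ℝ) {c : ℝ} (hc : 0 < c) (t s : ℝ) :
    eUL H W k1 k2 (c * t) (c * s) = c * eUL H W k1 k2 t s := by
  unfold eUL
  rw [show c * sInf {e : ℝ | ∃ Q : Matrix (Fin nMT) (Fin nMT) ℂ, Q.PosSemidef ∧
    s ≤ W * t * Real.logb 2 (((1 : Matrix (Fin nF) (Fin nF) ℂ) + H * Q * Hᴴ).det.re) ∧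
    e = k1 * t + k2 * t * (Matrix.trace Q).re} = c • sInf {e : ℝ | ∃ Q : Matrix (Fin nMT) (Fin nMT) ℂ, Q.PosSemidef ∧
    s ≤ W * t * Real.logb 2 (((1 : Matrix (Fin nF) (Fin nF) ℂ) + H * Q * Hᴴ).det.re) ∧
    e = k1 * t + k2 * t * (Matrix.trace Q).re} from rfl,
    ← Real.sInf_smul_of_nonneg hc.le]
  congr 1
  ext e
  simp only [Set.mem_smul_set, Set.mem_setOf_eq, smul_eq_mul]
  constructor
  · rintro ⟨Q, hQ, hcon, rfl⟩
    refine ⟨k1 * t + k2 * t * (Matrix.trace Q).re, ⟨Q, hQ, ?_, rfl⟩, by ring⟩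
    have h2 : W * (c * t) * Real.logb 2 (((1 : Matrix (Fin nF) (Fin nF) ℂ) + H * Q * Hᴴ).det.re)
        = c * (W * t * Real.logb 2 (((1 : Matrix (Fin nF) (Fin nF) ℂ) + H * Q * Hᴴ).det.re)) := by
      ring
    rw [h2] at hcon
    exact le_of_mul_le_mul_left hcon hc
  · rintro ⟨x, ⟨Q, hQ, hcon, rfl⟩, rfl⟩
    refine ⟨Q, hQ, ?_, by ring⟩
    have := mul_le_mul_of_nonneg_left hcon hc.le
    calc c * s ≤ c * (W * t * Real.logb 2 (((1 : Matrix (Fin nF) (Fin nF) ℂ) + H * Q * Hᴴ).det.re)) := this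
    _ = W * (c * t) * Real.logb 2 (((1 : Matrix (Fin nF) (Fin nF) ℂ) + H * Q * Hᴴ).det.re) := by ring

/-- Without a latency constraint, partial offloading is never optimal: the infimal total
energy over all partitions `S₁ ∈ [0, S_app]` and feasible transmission times equals
`S_app · min(ε₀, δ)`, where `δ = β_UL · ē_min + k_rx1 β_DL / R_DL + k_rx2 β_DL` and
`ē_min = inf { e_UL(1/r, 1) : 0 < r ≤ R_UL^max }`. -/
theorem no_latency_partial_offloading_never_optimal
    (nF nMT : ℕ) (H : Matrix (Fin nF) (Fin nMT) ℂ)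
    (W k1 k2 Sapp ε₀ βUL βDL RUL RDL krx1 krx2 : ℝ)
    (hW : 0 < W) (hk1 : 0 ≤ k1) (hk2 : 0 < k2)
    (hSapp : 0 < Sapp) (hε₀ : 0 < ε₀) (hβUL : 1 ≤ βUL) (hβDL : 0 < βDL)
    (hRUL : 0 < RUL) (hRDL : 0 < RDL) (hkrx1 : 0 ≤ krx1) (hkrx2 : 0 ≤ krx2)
    (emin δ : ℝ)
    (hemin : emin = sInf { e : ℝ | ∃ r : ℝ, 0 < r ∧ r ≤ RUL ∧ e = eUL H W k1 k2 (1 / r) 1 })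
    (hδ : δ = βUL * emin + krx1 * βDL / RDL + krx2 * βDL) :
    sInf { e : ℝ | ∃ S₁ tUL tDL : ℝ, 0 ≤ S₁ ∧ S₁ ≤ Sapp ∧ 0 < tUL ∧
        βUL * S₁ ≤ tUL * RUL ∧ βDL * S₁ / RDL ≤ tDL ∧
        e = eUL H W k1 k2 tUL (βUL * S₁) + ε₀ * (Sapp - S₁) + krx1 * tDL +
          krx2 * (βDL * S₁) } = Sapp * min ε₀ δ := by
  have hβUL0 : (0:ℝ) < βUL := lt_of_lt_of_le one_pos hβUL
  set Emin : Set ℝ := { e : ℝ | ∃ r : ℝ, 0 < r ∧ r ≤ RUL ∧ e = eUL H W k1 k2 (1 / r) 1 }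
    with hEdef
  have hEne : Emin.Nonempty := ⟨eUL H W k1 k2 (1 / RUL) 1, RUL, hRUL, le_rfl, rfl⟩
  have hEbdd : BddBelow Emin := by
    refine ⟨0, ?_⟩
    rintro e ⟨r, hr, -, rfl⟩
    exact eUL_nonneg H W k1 k2 hk1 hk2.le (by positivity) 1
  have hemin_le : ∀ r : ℝ, 0 < r → r ≤ RUL → emin ≤ eUL H W k1 k2 (1 / r) 1 := by
    intro r h1 h2
    rw [hemin]
    exact csInf_le hEbdd ⟨r, h1, h2, rfl⟩
  set T : Set ℝ := { e : ℝ | ∃ S₁ tUL tDL : ℝ, 0 ≤ S₁ ∧ S₁ ≤ Sapp ∧ 0 < tUL ∧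
        βUL * S₁ ≤ tUL * RUL ∧ βDL * S₁ / RDL ≤ tDL ∧
        e = eUL H W k1 k2 tUL (βUL * S₁) + ε₀ * (Sapp - S₁) + krx1 * tDL +
          krx2 * (βDL * S₁) } with hTdef
  have hTne : T.Nonempty := by
    refine ⟨_, 0, 1, 0, le_rfl, hSapp.le, one_pos, ?_, ?_, rfl⟩
    · rw [mul_zero]; positivity
    · rw [mul_zero, zero_div]
  have hlb : ∀ e ∈ T, Sapp * min ε₀ δ ≤ e := by
    rintro e ⟨S₁, tUL, tDL, hS0, hSa, ht, hrc, htDL, rfl⟩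
    have h1 : βUL * S₁ * emin ≤ eUL H W k1 k2 tUL (βUL * S₁) := by
      rcases hS0.eq_or_lt with h | h
      · rw [← h, mul_zero, zero_mul]
        exact eUL_nonneg H W k1 k2 hk1 hk2.le ht.le _
      · obtain ⟨c, hcdef⟩ : ∃ x : ℝ, x = βUL * S₁ := ⟨_, rfl⟩
        have hc : 0 < c := by rw [hcdef]; positivity
        obtain ⟨r, hrdef⟩ : ∃ x : ℝ, x = c / tUL := ⟨_, rfl⟩
        have hr0 : 0 < r := hrdef ▸ div_pos hc ht
        have hrR : r ≤ RUL := by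
          rw [hrdef, div_le_iff₀ ht, hcdef]
          linarith
        have htUL : tUL = c * (1 / r) := by
          rw [hrdef]
          field_simp
        have heq : eUL H W k1 k2 tUL (βUL * S₁) = c * eUL H W k1 k2 (1 / r) 1 := by
          rw [htUL, show βUL * S₁ = c * 1 by rw [hcdef]; ring]
          exact eUL_smul H W k1 k2 hc (1 / r) 1
        rw [heq, ← hcdef]
        exact mul_le_mul_of_nonneg_left (hemin_le r hr0 hrR) hc.le
    have h2 : krx1 * (βDL * S₁ / RDL) ≤ krx1 * tDL := mul_le_mul_of_nonneg_left htDL hkrx1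
    have p1 : min ε₀ δ * S₁ ≤ δ * S₁ :=
      mul_le_mul_of_nonneg_right (min_le_right ε₀ δ) hS0
    have p2 : min ε₀ δ * (Sapp - S₁) ≤ ε₀ * (Sapp - S₁) :=
      mul_le_mul_of_nonneg_right (min_le_left ε₀ δ) (by linarith)
    have pid : δ * S₁ = βUL * S₁ * emin + krx1 * (βDL * S₁ / RDL) + krx2 * (βDL * S₁) := by
      rw [hδ]; ring
    have pid2 : Sapp * min ε₀ δ = min ε₀ δ * S₁ + min ε₀ δ * (Sapp - S₁) := by ring
    linarith
  have hTbdd : BddBelow T := ⟨Sapp * min ε₀ δ, hlb⟩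
  have hlow : Sapp * min ε₀ δ ≤ sInf T := le_csInf hTne hlb
  have hub1 : sInf T ≤ Sapp * ε₀ := by
    apply le_of_forall_pos_le_add
    intro η hη
    obtain ⟨t, htdef⟩ : ∃ x : ℝ, x = η / (k1 + 1) := ⟨_, rfl⟩
    have ht : 0 < t := by rw [htdef]; positivity
    have hmem : eUL H W k1 k2 t (βUL * 0) + ε₀ * (Sapp - 0) + krx1 * 0 +
        krx2 * (βDL * 0) ∈ T := by
      refine ⟨0, t, 0, le_rfl, hSapp.le, ht, ?_, ?_, rfl⟩
      · rw [mul_zero]; positivity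
      · rw [mul_zero, zero_div]
    have hle := csInf_le hTbdd hmem
    have h3 : eUL H W k1 k2 t (βUL * 0) ≤ k1 * t := by
      rw [mul_zero]
      exact eUL_zero_le H W k1 k2 hk1 hk2.le ht.le
    have h4 : k1 * t ≤ η := by
      rw [htdef, ← mul_div_assoc, div_le_iff₀ (by positivity : (0:ℝ) < k1 + 1)]
      nlinarith
    have h5 : ε₀ * (Sapp - 0) = ε₀ * Sapp := by ring
    linarith
  have hub2 : sInf T ≤ Sapp * δ := by
    apply le_of_forall_pos_le_add
    intro η hη
    obtain ⟨c, hcdef⟩ : ∃ x : ℝ, x = βUL * Sapp := ⟨_, rfl⟩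
    have hc : 0 < c := by rw [hcdef]; positivity
    obtain ⟨a, ⟨r, hr0, hrR, rfl⟩, hlt⟩ :=
      Real.lt_sInf_add_pos hEne (show (0:ℝ) < η / c by positivity)
    rw [← hemin] at hlt
    have hmem : eUL H W k1 k2 (c * (1 / r)) (βUL * Sapp) + ε₀ * (Sapp - Sapp) +
        krx1 * (βDL * Sapp / RDL) + krx2 * (βDL * Sapp) ∈ T := by
      refine ⟨Sapp, c * (1 / r), βDL * Sapp / RDL, hSapp.le, le_rfl, by positivity,
        ?_, le_rfl, rfl⟩
      have hone : (1:ℝ) ≤ RUL / r := (one_le_div hr0).2 hrR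
      calc βUL * Sapp = c * 1 := by rw [hcdef]; ring
      _ ≤ c * (RUL / r) := mul_le_mul_of_nonneg_left hone hc.le
      _ = c * (1 / r) * RUL := by ring
    have hle := csInf_le hTbdd hmem
    have heq : eUL H W k1 k2 (c * (1 / r)) (βUL * Sapp) = c * eUL H W k1 k2 (1 / r) 1 := by
      rw [show βUL * Sapp = c * 1 by rw [hcdef]; ring]
      exact eUL_smul H W k1 k2 hc (1 / r) 1
    have h5 : c * eUL H W k1 k2 (1 / r) 1 ≤ c * (emin + η / c) :=
      mul_le_mul_of_nonneg_left hlt.le hc.le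
    have h6 : c * (emin + η / c) = c * emin + η := by
      field_simp
    have pid : Sapp * δ = c * emin + krx1 * (βDL * Sapp / RDL) + krx2 * (βDL * Sapp) := by
      rw [hδ, hcdef]; ring
    have h7 : ε₀ * (Sapp - Sapp) = 0 := by ring
    linarith
  refine le_antisymm ?_ hlow
  rcases le_total ε₀ δ with h | h
  · rw [min_eq_left h]; exact hub1
  · rw [min_eq_right h]; exact hub2
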